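/- Let G be a symplectomorphism germ of (H_0^{m}, ν), with ν given by the operator J = −(∂/∂x)^{-1}, so that dG(u)* J dG(u) = J for all u near 0. If dG(u)* maps H_0^{-m} to itself boundedly, then dG(u)* maps H_0^{m+1} to itself boundedly, and by interpolation dG(u)* : H_0^s → H_0^s boundedly for every s ∈ [−m, m+1]. -/

import Mathlib

open scoped ENNReal NNReal ComplexConjugate

noncomputable section

/-- The `H_0^s` norm in Fourier coefficients `f : ℤ → ℂ` (zero-mean: `f 0 = 0`). -/
def Hc (s : ℝ) (f : ℤ → ℂ) : ℝ≥0∞ :=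
  (∑' k : ℤ, (k.natAbs : ℝ≥0∞) ^ (2 * s) * (‖f k‖₊ : ℝ≥0∞) ^ 2) ^ ((1 : ℝ) / 2)

/-- The operator `J = −(∂/∂x)⁻¹` in Fourier coefficients: `(J f)_k = −f_k/(ik)` for `k ≠ 0`. -/
def Jop (f : ℤ → ℂ) : ℤ → ℂ := fun k => if k = 0 then 0 else -(f k / (Complex.I * k))

/-- The real `L²` pairing `⟨f, g⟩ = Re Σ_k f_k conj g_k`. -/
def pairing (f g : ℤ → ℂ) : ℝ := (∑' k : ℤ, f k * conj (g k)).re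

/-! ### Auxiliary machinery -/

namespace S7

/-- The weight `|k|^(2t)`. -/
def wt (t : ℝ) (k : ℤ) : ℝ≥0∞ := (k.natAbs : ℝ≥0∞) ^ (2 * t)

/-- A single term of the squared `H^t` norm. -/
def trm (t : ℝ) (g : ℤ → ℂ) (k : ℤ) : ℝ≥0∞ := wt t k * (‖g k‖₊ : ℝ≥0∞) ^ 2

/-- The squared `H^t` norm. -/
def En (t : ℝ) (g : ℤ → ℂ) : ℝ≥0∞ := ∑' k : ℤ, trm t g k

lemma Hc_eq (t : ℝ) (g : ℤ → ℂ) : Hc t g = En t g ^ ((1 : ℝ) / 2) := rfl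

lemma two_rpow_ne_zero (x : ℝ) : (2 : ℝ≥0∞) ^ x ≠ 0 := by
  simp [ENNReal.rpow_eq_zero_iff]

lemma two_rpow_ne_top (x : ℝ) : (2 : ℝ≥0∞) ^ x ≠ ∞ := by
  simp [ENNReal.rpow_eq_top_iff]

lemma two_rpow_add (x y : ℝ) : (2 : ℝ≥0∞) ^ (x + y) = 2 ^ x * 2 ^ y :=
  ENNReal.rpow_add _ _ two_ne_zero ENNReal.ofNat_ne_top

lemma rpow_half_sq (x : ℝ≥0∞) : (x ^ ((1 : ℝ) / 2)) ^ 2 = x := by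
  rw [← ENNReal.rpow_natCast (x ^ ((1 : ℝ) / 2)) 2, ← ENNReal.rpow_mul]
  norm_num

/-- `En`-level bound from an `Hc`-level bound. -/
lemma en_le_of_hc {t : ℝ} {C : ℝ≥0∞} {g h : ℤ → ℂ} (hle : Hc t g ≤ C * Hc t h) :
    En t g ≤ C ^ 2 * En t h := by
  have h1 : En t g = (Hc t g) ^ 2 := by rw [Hc_eq, rpow_half_sq]
  have h2 : En t h = (Hc t h) ^ 2 := by rw [Hc_eq, rpow_half_sq]
  rw [h1, h2, ← mul_pow]
  exact pow_le_pow_left' hle 2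

/-- `Hc`-level bound from an `En`-level bound. -/
lemma hc_le_of_en {t : ℝ} {D : ℝ≥0∞} {g h : ℤ → ℂ} (hle : En t g ≤ D * En t h) :
    Hc t g ≤ D ^ ((1 : ℝ) / 2) * Hc t h := by
  rw [Hc_eq, Hc_eq, ← ENNReal.mul_rpow_of_nonneg _ _ (by norm_num)]
  exact ENNReal.rpow_le_rpow hle (by norm_num)

/-! #### The isometry `J : H^s → H^{s+1}` -/

lemma Hc_Jop (s : ℝ) (h : ℤ → ℂ) (h0 : h 0 = 0) : Hc (s + 1) (Jop h) = Hc s h := by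
  unfold Hc
  congr 1
  refine tsum_congr fun k => ?_
  by_cases hk : k = 0
  · subst hk; simp [Jop, h0]
  · have hn : k.natAbs ≠ 0 := Int.natAbs_ne_zero.2 hk
    have hn0 : ((k.natAbs : ℝ≥0∞)) ≠ 0 := by exact_mod_cast hn
    have hnt : ((k.natAbs : ℝ≥0∞)) ≠ ∞ := ENNReal.natCast_ne_top _
    have hJ : Jop h k = -(h k / (Complex.I * k)) := if_neg hk
    have hnorm : (‖Jop h k‖₊ : ℝ≥0∞) = (‖h k‖₊ : ℝ≥0∞) / (k.natAbs : ℝ≥0∞) := by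
      rw [hJ, nnnorm_neg, nnnorm_div]
      have : ‖Complex.I * (k : ℂ)‖₊ = (k.natAbs : ℝ≥0) := by
        rw [nnnorm_mul, Complex.nnnorm_I, one_mul, Complex.nnnorm_intCast,
          NNReal.natCast_natAbs]
      rw [this, ENNReal.coe_div (by exact_mod_cast hn)]
      norm_cast
    rw [hnorm]
    rw [show 2 * (s + 1) = 2 * s + 2 by ring, ENNReal.rpow_add _ _ hn0 hnt]
    have h2 : ((k.natAbs : ℝ≥0∞)) ^ (2 : ℝ) = ((k.natAbs : ℝ≥0∞)) ^ (2 : ℕ) := by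
      rw [← ENNReal.rpow_natCast]; norm_num
    rw [h2, div_eq_mul_inv, mul_pow, ← ENNReal.inv_pow, mul_assoc]
    congr 1
    rw [mul_comm ((‖h k‖₊ : ℝ≥0∞) ^ 2), ← mul_assoc,
      ENNReal.mul_inv_cancel (pow_ne_zero _ hn0) (ENNReal.pow_ne_top hnt), one_mul]

/-! #### Dyadic bands -/

/-- The part of the squared `H^t` norm carried by the dyadic band
`2^i ≤ |k| < 2^(i+1)`. -/
def Sb (t : ℝ) (g : ℤ → ℂ) (i : ℕ) : ℝ≥0∞ :=
  ∑' k : ℤ, if k ≠ 0 ∧ Nat.log 2 k.natAbs = i then trm t g k else 0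

lemma En_eq_tsum_Sb (t : ℝ) (g : ℤ → ℂ) (hg : g 0 = 0) :
    En t g = ∑' i : ℕ, Sb t g i := by
  have h1 : ∀ k : ℤ, trm t g k
      = ∑' i : ℕ, (if k ≠ 0 ∧ Nat.log 2 k.natAbs = i then trm t g k else 0) := by
    intro k
    by_cases hk : k = 0
    · subst hk; simp [trm, hg]
    · rw [tsum_eq_single (Nat.log 2 k.natAbs) ?_]
      · rw [if_pos ⟨hk, rfl⟩]
      · intro i hi
        rw [if_neg]
        rintro ⟨-, h⟩
        exact hi h.symm
  calc En t g = ∑' k : ℤ, ∑' i : ℕ,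
        (if k ≠ 0 ∧ Nat.log 2 k.natAbs = i then trm t g k else 0) := tsum_congr h1
    _ = ∑' i : ℕ, Sb t g i := ENNReal.tsum_comm

lemma Sb_le_En (t : ℝ) (g : ℤ → ℂ) (i : ℕ) : Sb t g i ≤ En t g := by
  refine Summable.tsum_le_tsum (fun k => ?_) ENNReal.summable ENNReal.summable
  split_ifs
  · exact le_rfl
  · exact zero_le

lemma Sb_congr {t : ℝ} {g h : ℤ → ℂ} {i : ℕ}
    (he : ∀ k : ℤ, k ≠ 0 → Nat.log 2 k.natAbs = i → g k = h k) :
    Sb t g i = Sb t h i := by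
  refine tsum_congr fun k => ?_
  split_ifs with hc
  · unfold trm; rw [he k hc.1 hc.2]
  · rfl

lemma Sb_eq_zero {t : ℝ} {g : ℤ → ℂ} {i : ℕ}
    (he : ∀ k : ℤ, k ≠ 0 → Nat.log 2 k.natAbs = i → g k = 0) :
    Sb t g i = 0 := by
  have : ∀ k : ℤ, (if k ≠ 0 ∧ Nat.log 2 k.natAbs = i then trm t g k else 0) = 0 := by
    intro k
    split_ifs with hc
    · unfold trm; rw [he k hc.1 hc.2]; simp
    · rfl
  simp only [Sb, this, tsum_zero]

/-! #### Weight comparisons on a band -/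

lemma wt_up {γ : ℝ} (hγ : 0 ≤ γ) {k : ℤ} (hk : k ≠ 0) {i : ℕ}
    (hi : k.natAbs ≤ 2 ^ (i + 1)) (t : ℝ) :
    wt (t + γ) k ≤ (2 : ℝ≥0∞) ^ ((2 * γ) * ((i : ℝ) + 1)) * wt t k := by
  have hn : k.natAbs ≠ 0 := Int.natAbs_ne_zero.2 hk
  have hn0 : ((k.natAbs : ℝ≥0∞)) ≠ 0 := by exact_mod_cast hn
  have hnt : ((k.natAbs : ℝ≥0∞)) ≠ ∞ := ENNReal.natCast_ne_top _
  unfold wt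
  rw [show 2 * (t + γ) = 2 * γ + 2 * t by ring, ENNReal.rpow_add _ _ hn0 hnt]
  refine mul_le_mul_left ?_ _
  have h1 : ((k.natAbs : ℝ≥0∞)) ≤ (2 : ℝ≥0∞) ^ ((i : ℝ) + 1) := by
    calc ((k.natAbs : ℝ≥0∞)) ≤ ((2 ^ (i + 1) : ℕ) : ℝ≥0∞) := by exact_mod_cast hi
      _ = (2 : ℝ≥0∞) ^ ((i : ℝ) + 1) := by
        push_cast
        rw [← ENNReal.rpow_natCast (2 : ℝ≥0∞) (i + 1)]
        push_cast
        ring_nf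
  calc ((k.natAbs : ℝ≥0∞)) ^ (2 * γ) ≤ ((2 : ℝ≥0∞) ^ ((i : ℝ) + 1)) ^ (2 * γ) :=
        ENNReal.rpow_le_rpow h1 (by positivity)
    _ = (2 : ℝ≥0∞) ^ ((2 * γ) * ((i : ℝ) + 1)) := by
        rw [← ENNReal.rpow_mul]; congr 1; ring

lemma wt_down {γ : ℝ} (hγ : 0 ≤ γ) {k : ℤ} (hk : k ≠ 0) {i : ℕ}
    (hi : 2 ^ i ≤ k.natAbs) (t : ℝ) :
    wt (t - γ) k ≤ (2 : ℝ≥0∞) ^ (-((2 * γ) * (i : ℝ))) * wt t k := by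
  have hn : k.natAbs ≠ 0 := Int.natAbs_ne_zero.2 hk
  have hn0 : ((k.natAbs : ℝ≥0∞)) ≠ 0 := by exact_mod_cast hn
  have hnt : ((k.natAbs : ℝ≥0∞)) ≠ ∞ := ENNReal.natCast_ne_top _
  unfold wt
  rw [show 2 * (t - γ) = -(2 * γ) + 2 * t by ring, ENNReal.rpow_add _ _ hn0 hnt]
  refine mul_le_mul_left ?_ _
  have h1 : (2 : ℝ≥0∞) ^ ((i : ℝ)) ≤ ((k.natAbs : ℝ≥0∞)) := by
    calc (2 : ℝ≥0∞) ^ ((i : ℝ)) = ((2 ^ i : ℕ) : ℝ≥0∞) := by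
          push_cast
          rw [← ENNReal.rpow_natCast (2 : ℝ≥0∞) i]
      _ ≤ ((k.natAbs : ℝ≥0∞)) := by exact_mod_cast hi
  have h2 : (2 : ℝ≥0∞) ^ ((2 * γ) * (i : ℝ)) ≤ ((k.natAbs : ℝ≥0∞)) ^ (2 * γ) := by
    calc (2 : ℝ≥0∞) ^ ((2 * γ) * (i : ℝ)) = ((2 : ℝ≥0∞) ^ ((i : ℝ))) ^ (2 * γ) := by
          rw [← ENNReal.rpow_mul]; congr 1; ring
      _ ≤ ((k.natAbs : ℝ≥0∞)) ^ (2 * γ) := ENNReal.rpow_le_rpow h1 (by positivity)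
  rw [ENNReal.rpow_neg, ENNReal.rpow_neg]
  exact ENNReal.inv_le_inv.2 h2

lemma Sb_le_up {γ : ℝ} (hγ : 0 ≤ γ) (t : ℝ) (g : ℤ → ℂ) (i : ℕ) :
    Sb (t + γ) g i ≤ (2 : ℝ≥0∞) ^ ((2 * γ) * ((i : ℝ) + 1)) * Sb t g i := by
  rw [Sb, Sb, ← ENNReal.tsum_mul_left]
  refine Summable.tsum_le_tsum (fun k => ?_) ENNReal.summable ENNReal.summable
  split_ifs with hc
  · obtain ⟨hk, hlog⟩ := hc
    have hi : k.natAbs ≤ 2 ^ (i + 1) := by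
      rw [← hlog]
      exact (Nat.lt_pow_succ_log_self one_lt_two _).le
    unfold trm
    rw [← mul_assoc]
    exact mul_le_mul_left (wt_up hγ hk hi t) _
  · simp

lemma Sb_le_down {γ : ℝ} (hγ : 0 ≤ γ) (t : ℝ) (g : ℤ → ℂ) (i : ℕ) :
    Sb (t - γ) g i ≤ (2 : ℝ≥0∞) ^ (-((2 * γ) * (i : ℝ))) * Sb t g i := by
  rw [Sb, Sb, ← ENNReal.tsum_mul_left]
  refine Summable.tsum_le_tsum (fun k => ?_) ENNReal.summable ENNReal.summable
  split_ifs with hc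
  · obtain ⟨hk, hlog⟩ := hc
    have hi : 2 ^ i ≤ k.natAbs := by
      rw [← hlog]
      exact Nat.pow_log_le_self 2 (Int.natAbs_ne_zero.2 hk)
    unfold trm
    rw [← mul_assoc]
    exact mul_le_mul_left (wt_down hγ hk hi t) _
  · simp

/-! #### Low/high frequency cutoffs -/

/-- Low-frequency cutoff: keep `|k| < 2^N`. -/
def lowc (N : ℕ) (f : ℤ → ℂ) : ℤ → ℂ := fun k => if k.natAbs < 2 ^ N then f k else 0

/-- High-frequency cutoff: keep `|k| ≥ 2^N`. -/
def highc (N : ℕ) (f : ℤ → ℂ) : ℤ → ℂ := fun k => if k.natAbs < 2 ^ N then 0 else f k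

lemma low_add_high (N : ℕ) (f : ℤ → ℂ) : lowc N f + highc N f = f := by
  funext k
  simp only [Pi.add_apply, lowc, highc]
  split_ifs <;> ring

lemma lowc_zero {N : ℕ} {f : ℤ → ℂ} (hf : f 0 = 0) : lowc N f 0 = 0 := by
  simp [lowc, hf]

lemma highc_zero {N : ℕ} {f : ℤ → ℂ} (hf : f 0 = 0) : highc N f 0 = 0 := by
  simp [highc, hf]

lemma En_lowc_le {β : ℝ} (hβ : 0 ≤ β) (s : ℝ) (i : ℕ) (f : ℤ → ℂ) (hf : f 0 = 0) :
    En (s + β) (lowc i f)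
      ≤ ∑' j : ℕ, (if j < i then (2 : ℝ≥0∞) ^ ((2 * β) * ((j : ℝ) + 1)) * Sb s f j else 0) := by
  rw [En_eq_tsum_Sb _ _ (lowc_zero hf)]
  refine Summable.tsum_le_tsum (fun j => ?_) ENNReal.summable ENNReal.summable
  by_cases hj : j < i
  · rw [if_pos hj]
    have he : Sb (s + β) (lowc i f) j = Sb (s + β) f j := by
      refine Sb_congr fun k hk hlog => ?_
      have h1 : k.natAbs < 2 ^ i := by
        calc k.natAbs < 2 ^ (j + 1) := by
              rw [← hlog]; exact Nat.lt_pow_succ_log_self one_lt_two _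
          _ ≤ 2 ^ i := Nat.pow_le_pow_right (by norm_num) hj
      simp [lowc, h1]
    rw [he]
    exact Sb_le_up hβ s f j
  · rw [if_neg hj]
    refine le_of_eq (Sb_eq_zero fun k hk hlog => ?_)
    have h1 : ¬ (k.natAbs < 2 ^ i) := by
      push_neg
      calc (2:ℕ) ^ i ≤ 2 ^ j := Nat.pow_le_pow_right (by norm_num) (by omega)
        _ ≤ k.natAbs := by rw [← hlog]; exact Nat.pow_log_le_self 2 (Int.natAbs_ne_zero.2 hk)
    simp [lowc, h1]

lemma En_highc_le {α : ℝ} (hα : 0 ≤ α) (s : ℝ) (i : ℕ) (f : ℤ → ℂ) (hf : f 0 = 0) :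
    En (s - α) (highc i f)
      ≤ ∑' j : ℕ, (if i ≤ j then (2 : ℝ≥0∞) ^ (-((2 * α) * (j : ℝ))) * Sb s f j else 0) := by
  rw [En_eq_tsum_Sb _ _ (highc_zero hf)]
  refine Summable.tsum_le_tsum (fun j => ?_) ENNReal.summable ENNReal.summable
  by_cases hj : i ≤ j
  · rw [if_pos hj]
    have he : Sb (s - α) (highc i f) j = Sb (s - α) f j := by
      refine Sb_congr fun k hk hlog => ?_
      have h1 : ¬ (k.natAbs < 2 ^ i) := by
        push_neg
        calc (2:ℕ) ^ i ≤ 2 ^ j := Nat.pow_le_pow_right (by norm_num) hj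
          _ ≤ k.natAbs := by rw [← hlog]; exact Nat.pow_log_le_self 2 (Int.natAbs_ne_zero.2 hk)
      simp [highc, h1]
    rw [he]
    exact Sb_le_down hα s f j
  · rw [if_neg hj]
    refine le_of_eq (Sb_eq_zero fun k hk hlog => ?_)
    have h1 : k.natAbs < 2 ^ i := by
      calc k.natAbs < 2 ^ (j + 1) := by
            rw [← hlog]; exact Nat.lt_pow_succ_log_self one_lt_two _
        _ ≤ 2 ^ i := Nat.pow_le_pow_right (by norm_num) (by omega)
    simp [highc, h1]

/-! #### Kernel sums -/

lemma ker1 (c : ℝ) (j : ℕ) :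
    (∑' i : ℕ, if j < i then (2 : ℝ≥0∞) ^ (-(c * (i : ℝ))) else 0)
      ≤ (2 : ℝ≥0∞) ^ (-(c * ((j : ℝ) + 1))) * (1 - (2 : ℝ≥0∞) ^ (-c))⁻¹ := by
  set F : ℕ → ℝ≥0∞ := fun i => if j < i then (2 : ℝ≥0∞) ^ (-(c * (i : ℝ))) else 0 with hF
  have hinj : Function.Injective (fun d : ℕ => d + (j + 1)) := add_left_injective (j + 1)
  have hsupp : Function.support F ⊆ Set.range (fun d : ℕ => d + (j + 1)) := by
    intro i hi
    have hji : j < i := by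
      by_contra h
      exact hi (if_neg h)
    exact ⟨i - (j + 1), show i - (j + 1) + (j + 1) = i by omega⟩
  have key : ∑' d : ℕ, F (d + (j + 1)) = ∑' i : ℕ, F i := hinj.tsum_eq hsupp
  rw [← key]
  have he : ∀ d : ℕ, F (d + (j + 1))
      = (2 : ℝ≥0∞) ^ (-(c * ((j : ℝ) + 1))) * ((2 : ℝ≥0∞) ^ (-c)) ^ d := by
    intro d
    rw [hF]
    simp only
    rw [if_pos (by omega)]
    rw [← ENNReal.rpow_natCast ((2 : ℝ≥0∞) ^ (-c)) d, ← ENNReal.rpow_mul, ← two_rpow_add]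
    congr 1
    push_cast
    ring
  rw [tsum_congr he, ENNReal.tsum_mul_left, ENNReal.tsum_geometric]

lemma ker2 (c : ℝ) (j : ℕ) :
    (∑' i : ℕ, if i ≤ j then (2 : ℝ≥0∞) ^ (c * ((i : ℝ) + 1)) else 0)
      ≤ (2 : ℝ≥0∞) ^ (c * ((j : ℝ) + 1)) * (1 - (2 : ℝ≥0∞) ^ (-c))⁻¹ := by
  rw [tsum_eq_sum (s := Finset.range (j + 1))
      (by intro i hi; rw [if_neg]; simp only [Finset.mem_range] at hi; omega)]
  have h1 : ∀ i ∈ Finset.range (j + 1),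
      (if i ≤ j then (2 : ℝ≥0∞) ^ (c * ((i : ℝ) + 1)) else 0)
        = (2 : ℝ≥0∞) ^ (c * ((i : ℝ) + 1)) := by
    intro i hi
    rw [if_pos (by simp only [Finset.mem_range] at hi; omega)]
  rw [Finset.sum_congr rfl h1, ← Finset.sum_range_reflect]
  have h2 : ∀ i ∈ Finset.range (j + 1),
      (2 : ℝ≥0∞) ^ (c * (((j + 1 - 1 - i : ℕ) : ℝ) + 1))
        ≤ (2 : ℝ≥0∞) ^ (c * ((j : ℝ) + 1)) * ((2 : ℝ≥0∞) ^ (-c)) ^ i := by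
    intro i hi
    have hij : i ≤ j := by simp only [Finset.mem_range] at hi; omega
    have hcast : ((j + 1 - 1 - i : ℕ) : ℝ) = (j : ℝ) - i := by
      rw [show j + 1 - 1 - i = j - i from by omega, Nat.cast_sub hij]
    rw [hcast, ← ENNReal.rpow_natCast ((2 : ℝ≥0∞) ^ (-c)) i, ← ENNReal.rpow_mul,
      ← two_rpow_add]
    exact le_of_eq (by congr 1; ring)
  calc ∑ i ∈ Finset.range (j + 1), (2 : ℝ≥0∞) ^ (c * (((j + 1 - 1 - i : ℕ) : ℝ) + 1))
      ≤ ∑ i ∈ Finset.range (j + 1),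
          (2 : ℝ≥0∞) ^ (c * ((j : ℝ) + 1)) * ((2 : ℝ≥0∞) ^ (-c)) ^ i :=
        Finset.sum_le_sum h2
    _ = (2 : ℝ≥0∞) ^ (c * ((j : ℝ) + 1))
          * ∑ i ∈ Finset.range (j + 1), ((2 : ℝ≥0∞) ^ (-c)) ^ i := by
        rw [Finset.mul_sum]
    _ ≤ (2 : ℝ≥0∞) ^ (c * ((j : ℝ) + 1)) * (1 - (2 : ℝ≥0∞) ^ (-c))⁻¹ := by
        refine mul_le_mul_right ?_ _
        exact le_trans (ENNReal.sum_le_tsum _) (le_of_eq (ENNReal.tsum_geometric _))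

/-! #### Quadratic estimate -/

lemma sq_add_le (a b : ℝ≥0∞) : (a + b) ^ 2 ≤ 4 * a ^ 2 + 4 * b ^ 2 := by
  rcases le_total a b with h | h
  · calc (a + b) ^ 2 ≤ (b + b) ^ 2 := by gcongr
      _ = 4 * b ^ 2 := by ring
      _ ≤ 4 * a ^ 2 + 4 * b ^ 2 := le_add_self
  · calc (a + b) ^ 2 ≤ (a + a) ^ 2 := by gcongr
      _ = 4 * a ^ 2 := by ring
      _ ≤ 4 * a ^ 2 + 4 * b ^ 2 := le_self_add

lemma Sb_split {t : ℝ} {g g1 g2 : ℤ → ℂ} (hg : ∀ k, g k = g1 k + g2 k) (i : ℕ) :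
    Sb t g i ≤ 4 * Sb t g1 i + 4 * Sb t g2 i := by
  rw [Sb, Sb, Sb, ← ENNReal.tsum_mul_left, ← ENNReal.tsum_mul_left, ← ENNReal.tsum_add]
  refine Summable.tsum_le_tsum (fun k => ?_) ENNReal.summable ENNReal.summable
  split_ifs with hc
  · unfold trm
    rw [hg k]
    have hn : (‖g1 k + g2 k‖₊ : ℝ≥0∞) ^ 2
        ≤ 4 * (‖g1 k‖₊ : ℝ≥0∞) ^ 2 + 4 * (‖g2 k‖₊ : ℝ≥0∞) ^ 2 := by
      calc (‖g1 k + g2 k‖₊ : ℝ≥0∞) ^ 2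
          ≤ ((‖g1 k‖₊ : ℝ≥0∞) + (‖g2 k‖₊ : ℝ≥0∞)) ^ 2 := by
            gcongr
            exact_mod_cast nnnorm_add_le _ _
        _ ≤ 4 * (‖g1 k‖₊ : ℝ≥0∞) ^ 2 + 4 * (‖g2 k‖₊ : ℝ≥0∞) ^ 2 := sq_add_le _ _
    calc wt t k * (‖g1 k + g2 k‖₊ : ℝ≥0∞) ^ 2
        ≤ wt t k * (4 * (‖g1 k‖₊ : ℝ≥0∞) ^ 2 + 4 * (‖g2 k‖₊ : ℝ≥0∞) ^ 2) :=
          mul_le_mul_right hn _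
      _ = 4 * (wt t k * (‖g1 k‖₊ : ℝ≥0∞) ^ 2) + 4 * (wt t k * (‖g2 k‖₊ : ℝ≥0∞) ^ 2) := by
          ring
  · simp

/-! #### The interpolation core -/

lemma core (T : (ℤ → ℂ) → ℤ → ℂ) (hT : IsLinearMap ℝ T)
    (hTz : ∀ f : ℤ → ℂ, f 0 = 0 → T f 0 = 0)
    (p q s : ℝ) (hps : p < s) (hsq : s < q)
    (D0 D1 : ℝ≥0∞) (hD0 : D0 < ∞) (hD1 : D1 < ∞)
    (h0 : ∀ f : ℤ → ℂ, f 0 = 0 → En p (T f) ≤ D0 * En p f)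
    (h1 : ∀ f : ℤ → ℂ, f 0 = 0 → En q (T f) ≤ D1 * En q f) :
    ∃ C : ℝ≥0∞, C < ∞ ∧ ∀ f, f 0 = 0 → Hc s (T f) ≤ C * Hc s f := by
  set α : ℝ := s - p with hα
  set β : ℝ := q - s with hβ
  have hα0 : 0 < α := by simp [hα]; linarith
  have hβ0 : 0 < β := by simp [hβ]; linarith
  set c0 : ℝ := 2 * α with hc0
  set c1 : ℝ := 2 * β with hc1
  set K0 : ℝ≥0∞ := (1 - (2 : ℝ≥0∞) ^ (-c0))⁻¹ with hK0
  set K1 : ℝ≥0∞ := (1 - (2 : ℝ≥0∞) ^ (-c1))⁻¹ with hK1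
  have hK0top : K0 ≠ ∞ := by
    rw [hK0, Ne, ENNReal.inv_eq_top, tsub_eq_zero_iff_le, not_le]
    exact ENNReal.rpow_lt_one_of_one_lt_of_neg (by norm_num) (by simp [hc0]; positivity)
  have hK1top : K1 ≠ ∞ := by
    rw [hK1, Ne, ENNReal.inv_eq_top, tsub_eq_zero_iff_le, not_le]
    exact ENNReal.rpow_lt_one_of_one_lt_of_neg (by norm_num) (by simp [hc1]; positivity)
  set D : ℝ≥0∞ := 4 * D1 * K1 + 4 * D0 * ((2 : ℝ≥0∞) ^ c0 * K0) with hD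
  have hDtop : D ≠ ∞ := by
    rw [hD]
    refine ENNReal.add_ne_top.2 ⟨?_, ?_⟩
    · exact ENNReal.mul_ne_top (ENNReal.mul_ne_top (by norm_num) hD1.ne) hK1top
    · exact ENNReal.mul_ne_top (ENNReal.mul_ne_top (by norm_num) hD0.ne)
        (ENNReal.mul_ne_top (two_rpow_ne_top _) hK0top)
  have main : ∀ f : ℤ → ℂ, f 0 = 0 → En s (T f) ≤ D * En s f := by
    intro f hf
    set b : ℕ → ℝ≥0∞ := fun j => Sb s f j with hb
    have hEf : En s f = ∑' j : ℕ, b j := En_eq_tsum_Sb s f hf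
    set X : ℕ → ℕ → ℝ≥0∞ := fun i j =>
      if j < i then (2 : ℝ≥0∞) ^ (-(c1 * (i : ℝ)))
        * ((2 : ℝ≥0∞) ^ (c1 * ((j : ℝ) + 1)) * b j) else 0 with hX
    set Y : ℕ → ℕ → ℝ≥0∞ := fun i j =>
      if i ≤ j then (2 : ℝ≥0∞) ^ (c0 * ((i : ℝ) + 1))
        * ((2 : ℝ≥0∞) ^ (-(c0 * (j : ℝ))) * b j) else 0 with hY
    -- per-band estimate
    have claim : ∀ i : ℕ,
        Sb s (T f) i ≤ 4 * D1 * ∑' j, X i j + 4 * D0 * ∑' j, Y i j := by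
      intro i
      have hfl0 : lowc i f 0 = 0 := lowc_zero hf
      have hfh0 : highc i f 0 = 0 := highc_zero hf
      have hsplitf : ∀ k, T f k = T (lowc i f) k + T (highc i f) k := by
        intro k
        have : T f = T (lowc i f) + T (highc i f) := by
          conv_lhs => rw [← low_add_high i f]
          exact hT.map_add _ _
        rw [this]; rfl
      have step1 : Sb s (T f) i ≤ 4 * Sb s (T (lowc i f)) i + 4 * Sb s (T (highc i f)) i :=
        Sb_split hsplitf i
      -- low part
      have low1 : Sb s (T (lowc i f)) i
          ≤ (2 : ℝ≥0∞) ^ (-(c1 * (i : ℝ))) * En q (T (lowc i f)) := by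
        have e1 : Sb s (T (lowc i f)) i
            ≤ (2 : ℝ≥0∞) ^ (-((2 * β) * (i : ℝ))) * Sb q (T (lowc i f)) i := by
          have := Sb_le_down hβ0.le q (T (lowc i f)) i
          rw [show q - β = s by rw [hβ]; ring] at this
          exact this
        refine e1.trans ?_
        rw [show -((2 * β) * (i : ℝ)) = -(c1 * (i : ℝ)) by rw [hc1]]
        exact mul_le_mul_right (Sb_le_En q _ i) _
      have low2 : En q (T (lowc i f)) ≤ D1 * En q (lowc i f) := h1 _ hfl0
      have low3 : En q (lowc i f)
          ≤ ∑' j : ℕ, (if j < i then (2 : ℝ≥0∞) ^ (c1 * ((j : ℝ) + 1)) * b j else 0) := by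
        have := En_lowc_le hβ0.le s i f hf
        rw [show s + β = q by rw [hβ]; ring] at this
        refine this.trans (le_of_eq (tsum_congr fun j => ?_))
        rw [show (2 : ℝ) * β = c1 from rfl]
      have lowAll : Sb s (T (lowc i f)) i ≤ D1 * ∑' j, X i j := by
        calc Sb s (T (lowc i f)) i
            ≤ (2 : ℝ≥0∞) ^ (-(c1 * (i : ℝ)))
              * (D1 * ∑' j : ℕ, (if j < i then (2 : ℝ≥0∞) ^ (c1 * ((j : ℝ) + 1)) * b j else 0)) :=
              low1.trans (mul_le_mul_right (low2.trans (mul_le_mul_right low3 _)) _)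
          _ = D1 * ∑' j, X i j := by
              rw [← ENNReal.tsum_mul_left, ← ENNReal.tsum_mul_left, ← ENNReal.tsum_mul_left]
              refine tsum_congr fun j => ?_
              rw [hX]
              simp only
              split_ifs with hj
              · ring
              · simp
      -- high part
      have high1 : Sb s (T (highc i f)) i
          ≤ (2 : ℝ≥0∞) ^ (c0 * ((i : ℝ) + 1)) * En p (T (highc i f)) := by
        have e1 : Sb s (T (highc i f)) i
            ≤ (2 : ℝ≥0∞) ^ ((2 * α) * ((i : ℝ) + 1)) * Sb p (T (highc i f)) i := by
          have := Sb_le_up hα0.le p (T (highc i f)) i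
          rw [show p + α = s by rw [hα]; ring] at this
          exact this
        refine e1.trans ?_
        rw [show (2 * α) * ((i : ℝ) + 1) = c0 * ((i : ℝ) + 1) by rw [hc0]]
        exact mul_le_mul_right (Sb_le_En p _ i) _
      have high2 : En p (T (highc i f)) ≤ D0 * En p (highc i f) := h0 _ hfh0
      have high3 : En p (highc i f)
          ≤ ∑' j : ℕ, (if i ≤ j then (2 : ℝ≥0∞) ^ (-(c0 * (j : ℝ))) * b j else 0) := by
        have := En_highc_le hα0.le s i f hf
        rw [show s - α = p by rw [hα]; ring] at this
        refine this.trans (le_of_eq (tsum_congr fun j => ?_))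
        rw [show -((2 * α) * (j : ℝ)) = -(c0 * (j : ℝ)) by rw [hc0]]
      have highAll : Sb s (T (highc i f)) i ≤ D0 * ∑' j, Y i j := by
        calc Sb s (T (highc i f)) i
            ≤ (2 : ℝ≥0∞) ^ (c0 * ((i : ℝ) + 1))
              * (D0 * ∑' j : ℕ, (if i ≤ j then (2 : ℝ≥0∞) ^ (-(c0 * (j : ℝ))) * b j else 0)) :=
              high1.trans (mul_le_mul_right (high2.trans (mul_le_mul_right high3 _)) _)
          _ = D0 * ∑' j, Y i j := by
              rw [← ENNReal.tsum_mul_left, ← ENNReal.tsum_mul_left, ← ENNReal.tsum_mul_left]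
              refine tsum_congr fun j => ?_
              rw [hY]
              simp only
              split_ifs with hj
              · ring
              · simp
      calc Sb s (T f) i ≤ 4 * Sb s (T (lowc i f)) i + 4 * Sb s (T (highc i f)) i := step1
        _ ≤ 4 * (D1 * ∑' j, X i j) + 4 * (D0 * ∑' j, Y i j) := by
            gcongr
        _ = 4 * D1 * ∑' j, X i j + 4 * D0 * ∑' j, Y i j := by ring
    -- sum the per-band estimates
    have sumX : ∑' i : ℕ, ∑' j : ℕ, X i j ≤ K1 * ∑' j, b j := by
      rw [ENNReal.tsum_comm]
      have hXj : ∀ j : ℕ, ∑' i : ℕ, X i j ≤ K1 * b j := by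
        intro j
        have e1 : ∀ i : ℕ, X i j
            = (if j < i then (2 : ℝ≥0∞) ^ (-(c1 * (i : ℝ))) else 0)
              * ((2 : ℝ≥0∞) ^ (c1 * ((j : ℝ) + 1)) * b j) := by
          intro i
          rw [hX]
          simp only
          split_ifs with hj
          · rfl
          · rw [zero_mul]
        calc ∑' i : ℕ, X i j
            = (∑' i : ℕ, if j < i then (2 : ℝ≥0∞) ^ (-(c1 * (i : ℝ))) else 0)
              * ((2 : ℝ≥0∞) ^ (c1 * ((j : ℝ) + 1)) * b j) := by
              rw [tsum_congr e1, ENNReal.tsum_mul_right]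
          _ ≤ ((2 : ℝ≥0∞) ^ (-(c1 * ((j : ℝ) + 1))) * K1)
              * ((2 : ℝ≥0∞) ^ (c1 * ((j : ℝ) + 1)) * b j) :=
              mul_le_mul_left (ker1 c1 j) _
          _ = ((2 : ℝ≥0∞) ^ (-(c1 * ((j : ℝ) + 1))) * (2 : ℝ≥0∞) ^ (c1 * ((j : ℝ) + 1)))
              * (K1 * b j) := by ring
          _ = K1 * b j := by
              rw [← two_rpow_add, neg_add_cancel, ENNReal.rpow_zero, one_mul]
      calc ∑' j : ℕ, ∑' i : ℕ, X i j ≤ ∑' j : ℕ, K1 * b j :=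
            Summable.tsum_le_tsum hXj ENNReal.summable ENNReal.summable
        _ = K1 * ∑' j, b j := ENNReal.tsum_mul_left
    have sumY : ∑' i : ℕ, ∑' j : ℕ, Y i j ≤ (2 : ℝ≥0∞) ^ c0 * K0 * ∑' j, b j := by
      rw [ENNReal.tsum_comm]
      have hYj : ∀ j : ℕ, ∑' i : ℕ, Y i j ≤ (2 : ℝ≥0∞) ^ c0 * K0 * b j := by
        intro j
        have e1 : ∀ i : ℕ, Y i j
            = (if i ≤ j then (2 : ℝ≥0∞) ^ (c0 * ((i : ℝ) + 1)) else 0)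
              * ((2 : ℝ≥0∞) ^ (-(c0 * (j : ℝ))) * b j) := by
          intro i
          rw [hY]
          simp only
          split_ifs with hj
          · rfl
          · rw [zero_mul]
        calc ∑' i : ℕ, Y i j
            = (∑' i : ℕ, if i ≤ j then (2 : ℝ≥0∞) ^ (c0 * ((i : ℝ) + 1)) else 0)
              * ((2 : ℝ≥0∞) ^ (-(c0 * (j : ℝ))) * b j) := by
              rw [tsum_congr e1, ENNReal.tsum_mul_right]
          _ ≤ ((2 : ℝ≥0∞) ^ (c0 * ((j : ℝ) + 1)) * K0)
              * ((2 : ℝ≥0∞) ^ (-(c0 * (j : ℝ))) * b j) :=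
              mul_le_mul_left (ker2 c0 j) _
          _ = ((2 : ℝ≥0∞) ^ (c0 * ((j : ℝ) + 1)) * (2 : ℝ≥0∞) ^ (-(c0 * (j : ℝ))))
              * (K0 * b j) := by ring
          _ = (2 : ℝ≥0∞) ^ c0 * K0 * b j := by
              rw [← two_rpow_add, show c0 * ((j : ℝ) + 1) + -(c0 * (j : ℝ)) = c0 by ring]
              ring
      calc ∑' j : ℕ, ∑' i : ℕ, Y i j ≤ ∑' j : ℕ, (2 : ℝ≥0∞) ^ c0 * K0 * b j :=
            Summable.tsum_le_tsum hYj ENNReal.summable ENNReal.summable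
        _ = (2 : ℝ≥0∞) ^ c0 * K0 * ∑' j, b j := ENNReal.tsum_mul_left
    calc En s (T f) = ∑' i : ℕ, Sb s (T f) i := En_eq_tsum_Sb s (T f) (hTz f hf)
      _ ≤ ∑' i : ℕ, (4 * D1 * ∑' j, X i j + 4 * D0 * ∑' j, Y i j) :=
          Summable.tsum_le_tsum claim ENNReal.summable ENNReal.summable
      _ = 4 * D1 * ∑' i, ∑' j, X i j + 4 * D0 * ∑' i, ∑' j, Y i j := by
          rw [ENNReal.tsum_add, ENNReal.tsum_mul_left, ENNReal.tsum_mul_left]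
      _ ≤ 4 * D1 * (K1 * ∑' j, b j) + 4 * D0 * ((2 : ℝ≥0∞) ^ c0 * K0 * ∑' j, b j) := by
          gcongr
      _ = D * ∑' j, b j := by rw [hD]; ring
      _ = D * En s f := by rw [hEf]
  refine ⟨D ^ ((1 : ℝ) / 2), ?_, fun f hf => hc_le_of_en (main f hf)⟩
  exact ENNReal.rpow_lt_top_of_nonneg (by norm_num) hDtop

end S7

open S7 in
/-- Let `G` be a symplectomorphism germ of `(H_0^m, ν)`, `ν` given by
`J = −(∂/∂x)⁻¹`, so that `dG(u)* J dG(u) = J`.  Let `A = dG(u)` (bounded on `H_0^m` together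
with its inverse) and let `A* = dG(u)*` be its adjoint for the `L²` pairing.  If `A*` maps
`H_0^{-m}` boundedly to itself, then `A*` maps `H_0^{m+1}` boundedly to itself, and by
interpolation `A* : H_0^s → H_0^s` boundedly for every `s ∈ [−m, m+1]`. -/
theorem adjoint_bounded_on_scale (m : ℝ) (hm : 0 ≤ m)
    (A Ainv Astar : (ℤ → ℂ) → ℤ → ℂ)
    (hAlin : IsLinearMap ℝ A) (hAslin : IsLinearMap ℝ Astar)
    (hzero : ∀ f : ℤ → ℂ, f 0 = 0 → (A f) 0 = 0 ∧ (Ainv f) 0 = 0 ∧ (Astar f) 0 = 0)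
    (hinv : ∀ f : ℤ → ℂ, f 0 = 0 → Ainv (A f) = f ∧ A (Ainv f) = f)
    (hadj : ∀ f g : ℤ → ℂ, f 0 = 0 → g 0 = 0 → pairing (A f) g = pairing f (Astar g))
    (hsymp : ∀ f : ℤ → ℂ, f 0 = 0 → Astar (Jop (A f)) = Jop f)
    (hAbd : ∃ C : ℝ≥0∞, C < ∞ ∧ ∀ f, f 0 = 0 → Hc m (A f) ≤ C * Hc m f)
    (hAinvbd : ∃ C : ℝ≥0∞, C < ∞ ∧ ∀ f, f 0 = 0 → Hc m (Ainv f) ≤ C * Hc m f)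
    (hneg : ∃ C : ℝ≥0∞, C < ∞ ∧ ∀ f, f 0 = 0 → Hc (-m) (Astar f) ≤ C * Hc (-m) f) :
    (∃ C : ℝ≥0∞, C < ∞ ∧ ∀ f, f 0 = 0 → Hc (m + 1) (Astar f) ≤ C * Hc (m + 1) f) ∧
    ∀ s : ℝ, -m ≤ s → s ≤ m + 1 →
      ∃ C : ℝ≥0∞, C < ∞ ∧ ∀ f, f 0 = 0 → Hc s (Astar f) ≤ C * Hc s f := by
  obtain ⟨Ci, hCi, hCinv⟩ := hAinvbd
  -- Part 1: boundedness on `H^{m+1}` via `A* = J ∘ A⁻¹ ∘ J⁻¹`.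
  have part1 : ∀ g : ℤ → ℂ, g 0 = 0 → Hc (m + 1) (Astar g) ≤ Ci * Hc (m + 1) g := by
    intro g hg
    set h : ℤ → ℂ := fun k => if k = 0 then 0 else -(Complex.I * k) * g k with hh
    have h0 : h 0 = 0 := by simp [hh]
    have hJh : Jop h = g := by
      funext k
      by_cases hk : k = 0
      · simp [Jop, hk, hg]
      · have hIk : Complex.I * (k : ℂ) ≠ 0 :=
          mul_ne_zero Complex.I_ne_zero (by exact_mod_cast hk)
        simp only [Jop, hh, if_neg hk]
        field_simp
    have hf0 : Ainv h 0 = 0 := (hzero h h0).2.1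
    have hAf : A (Ainv h) = h := (hinv h h0).2
    have key : Astar g = Jop (Ainv h) := by
      have := hsymp (Ainv h) hf0
      rw [hAf] at this
      rw [← hJh]
      exact this
    rw [key, ← hJh, Hc_Jop m (Ainv h) hf0, Hc_Jop m h h0]
    exact hCinv h h0
  refine ⟨⟨Ci, hCi, part1⟩, ?_⟩
  intro s hs1 hs2
  rcases eq_or_lt_of_le hs1 with hEq | hlt1
  · obtain ⟨C0, hC0, hC0b⟩ := hneg
    exact ⟨C0, hC0, by rw [← hEq]; exact hC0b⟩
  rcases eq_or_lt_of_le hs2 with hEq2 | hlt2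
  · exact ⟨Ci, hCi, by rw [hEq2]; exact part1⟩
  -- interior case: interpolation
  obtain ⟨C0, hC0, hC0b⟩ := hneg
  refine core Astar hAslin (fun f hf => (hzero f hf).2.2) (-m) (m + 1) s hlt1 hlt2
    (C0 ^ 2) (Ci ^ 2) ?_ ?_ ?_ ?_
  · exact ENNReal.pow_lt_top hC0
  · exact ENNReal.pow_lt_top hCi
  · exact fun f hf => en_le_of_hc (hC0b f hf)
  · exact fun f hf => en_le_of_hc (part1 f hf)

end
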